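/- Let I, J, K, R be positive integers. The set of triples (X, Y, Z) ∈ ℝ^{I×R} × ℝ^{J×R} × ℝ^{K×R} for which the iterated Khatri–Rao product Z ⊙ Y ⊙ X does not have rank equal to min(IJK, R) has Lebesgue measure zero. In other words, for generic X, Y, Z, rank(Z ⊙ Y ⊙ X) = min(IJK, R). -/

import Mathlib

/-- The Khatri–Rao (columnwise Kronecker) product: for `A : α × γ` and `B : β × γ`
matrices, `(khatriRao A B) (i, j) r = A i r * B j r`, i.e. the `r`-th column of
`khatriRao A B` is the Kronecker product of the `r`-th columns of `A` and `B`. -/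
def khatriRao {α β γ : Type*} (A : Matrix α γ ℝ) (B : Matrix β γ ℝ) :
    Matrix (α × β) γ ℝ :=
  Matrix.of fun p r => A p.1 r * B p.2 r

open MeasureTheory MvPolynomial

lemma mv_zero_null : ∀ (n : ℕ) (p : MvPolynomial (Fin n) ℝ), p ≠ 0 →
    volume {x : Fin n → ℝ | eval x p = 0} = 0 := by
  intro n
  induction n with
  | zero =>
    intro p hp
    have h : {x : Fin 0 → ℝ | eval x p = 0} = ∅ := by
      ext x
      simp only [Set.mem_setOf_eq, Set.mem_empty_iff_false, iff_false]
      rw [eq_C_of_isEmpty p, eval_C]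
      intro h
      exact hp (by rw [eq_C_of_isEmpty p, h, map_zero])
    rw [h]; exact measure_empty
  | succ n ih =>
    intro p hp
    set q := finSuccEquiv ℝ n p with hq_def
    have hq : q ≠ 0 := by
      intro h
      apply hp
      apply (finSuccEquiv ℝ n).injective
      rw [map_zero, ← hq_def]
      exact h
    have hlc : q.leadingCoeff ≠ 0 := Polynomial.leadingCoeff_ne_zero.mpr hq
    set S : Set ((Fin n → ℝ) × ℝ) :=
      {y | eval (Fin.cons y.2 y.1) p = 0} with hS_def
    have hcont : Continuous fun y : (Fin n → ℝ) × ℝ => eval (Fin.cons y.2 y.1 : Fin (n+1) → ℝ) p := by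
      apply (MvPolynomial.continuous_eval (p := p)).comp
      apply continuous_pi
      intro i
      refine Fin.cases ?_ ?_ i
      · simpa using continuous_snd
      · intro j; simp; exact (continuous_apply j).comp continuous_fst
    have hSm : MeasurableSet S :=
      hcont.measurable (measurableSet_singleton (0 : ℝ))
    have hslice : ∀ y1 : Fin n → ℝ, Prod.mk y1 ⁻¹' S
        = {a : ℝ | Polynomial.eval a (q.map (eval y1)) = 0} := by
      intro y1
      ext a
      simp only [hS_def, Set.mem_preimage, Set.mem_setOf_eq]
      rw [eval_eq_eval_mv_eval']
    have hSnull : (volume.prod volume) S = 0 := by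
      rw [Measure.measure_prod_null hSm]
      have hN := ih q.leadingCoeff hlc
      rw [measure_eq_zero_iff_ae_notMem] at hN
      filter_upwards [hN] with y1 hy1
      have hpoly : q.map (eval y1) ≠ 0 := by
        intro h0
        apply hy1
        show eval y1 q.leadingCoeff = 0
        have h2 : eval y1 (q.coeff q.natDegree) = 0 := by
          have := congrArg (fun r => Polynomial.coeff r q.natDegree) h0
          simpa [Polynomial.coeff_map] using this
        exact h2
      have hfin : {a : ℝ | Polynomial.eval a (q.map (eval y1)) = 0}.Finite := by
        simpa [Polynomial.IsRoot] using Polynomial.finite_setOf_isRoot hpoly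
      show volume (Prod.mk y1 ⁻¹' S) = 0
      rw [hslice y1]
      exact hfin.measure_zero _
    set T := MeasurableEquiv.piFinSuccAbove (fun _ : Fin (n+1) => ℝ) 0 with hT_def
    have hT : MeasurePreserving T volume volume := volume_preserving_piFinSuccAbove _ 0
    have hswap : MeasurePreserving (Prod.swap : ℝ × (Fin n → ℝ) → (Fin n → ℝ) × ℝ)
        volume (volume.prod volume) := by
      have h := Measure.measurePreserving_swap (μ := (volume : Measure ℝ))
        (ν := (volume : Measure (Fin n → ℝ)))
      rwa [← Measure.volume_eq_prod] at h
    have hcomp := hswap.comp hT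
    have hpre : {x : Fin (n+1) → ℝ | eval x p = 0} = (Prod.swap ∘ T) ⁻¹' S := by
      ext x
      have hTx : T x = (x 0, fun j : Fin n => x j.succ) := by
        simp [hT_def, MeasurableEquiv.piFinSuccAbove]
        rfl
      simp only [Set.mem_setOf_eq, Set.mem_preimage, Function.comp_apply, hTx, hS_def,
        Prod.swap]
      rw [show (fun j : Fin n => x j.succ) = Fin.tail x from rfl, Fin.cons_self_tail x]
    rw [hpre]
    rw [hcomp.measure_preimage hSm.nullMeasurableSet]
    exact hSnull

lemma mv_zero_null_fintype {ι : Type} [Fintype ι] (p : MvPolynomial ι ℝ) (hp : p ≠ 0) :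
    volume {x : ι → ℝ | eval x p = 0} = 0 := by
  set n := Fintype.card ι with hn
  set e : ι ≃ Fin n := Fintype.equivFin ι with he
  set ΨE := MeasurableEquiv.piCongrLeft (fun _ : ι => ℝ) e.symm with hΨE
  have hΨ : MeasurePreserving ΨE volume volume :=
    volume_measurePreserving_piCongrLeft _ _
  have hmeas : MeasurableSet {x : ι → ℝ | eval x p = 0} :=
    (MvPolynomial.continuous_eval (p := p)).measurable (measurableSet_singleton (0 : ℝ))
  have hren : rename (⇑e) p ≠ 0 := by
    intro h
    exact hp (rename_injective _ e.injective (by rw [h, map_zero]))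
  have him : ΨE ⁻¹' {x : ι → ℝ | eval x p = 0}
      = {z : Fin n → ℝ | eval z (rename (⇑e) p) = 0} := by
    ext z
    have hz : ΨE z = z ∘ e := by
      funext i
      have h1 : ΨE z (e.symm (e i)) = z (e i) :=
        MeasurableEquiv.piCongrLeft_apply_apply (β := fun _ : ι => ℝ) e.symm z (e i)
      simpa using h1
    simp only [Set.mem_preimage, Set.mem_setOf_eq, eval_rename, hz]
  calc volume {x : ι → ℝ | eval x p = 0}
      = volume (ΨE ⁻¹' {x : ι → ℝ | eval x p = 0}) :=
        (hΨ.measure_preimage hmeas.nullMeasurableSet).symm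
    _ = 0 := by rw [him]; exact mv_zero_null n _ hren

/-- Currying as a measurable equivalence. -/
def curryME (α β : Type*) : (α × β → ℝ) ≃ᵐ (α → β → ℝ) where
  toEquiv := Equiv.curry α β ℝ
  measurable_toFun :=
    measurable_pi_lambda _ fun i => measurable_pi_lambda _ fun r => measurable_pi_apply (i, r)
  measurable_invFun :=
    measurable_pi_lambda _ fun pr => (measurable_pi_apply pr.2).comp (measurable_pi_apply pr.1)

lemma curryMP : ∀ (n q : ℕ), MeasurePreserving (curryME (Fin n) (Fin q)) volume volume := by
  intro n
  induction n with
  | zero =>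
    intro q
    refine ⟨(curryME _ _).measurable, ?_⟩
    rw [volume_pi, volume_pi, Measure.pi_of_empty, Measure.pi_of_empty,
      Measure.map_dirac' (curryME _ _).measurable]
    congr 1
    exact Subsingleton.elim _ _
  | succ n ih =>
    intro q
    let e₁ : (Fin q ⊕ (Fin n × Fin q)) ≃ (Fin (n+1) × Fin q) :=
      { toFun := Sum.elim (fun r => ((0 : Fin (n+1)), r)) fun pr => (pr.1.succ, pr.2)
        invFun := fun pr => if h : pr.1 = 0 then Sum.inl pr.2
          else Sum.inr (pr.1.pred h, pr.2)
        left_inv := by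
          rintro (r | ⟨i, r⟩)
          · simp
          · simp [Fin.succ_ne_zero]
        right_inv := by
          rintro ⟨i, r⟩
          by_cases h : i = 0
          · subst h; simp
          · simp [h] }
    have hA : MeasurePreserving
        ((MeasurableEquiv.piCongrLeft (fun _ : Fin (n+1) × Fin q => ℝ) e₁).symm)
        volume volume :=
      (volume_measurePreserving_piCongrLeft (fun _ : Fin (n+1) × Fin q => ℝ) e₁).symm
    have hB : MeasurePreserving
        (MeasurableEquiv.sumPiEquivProdPi (fun _ : Fin q ⊕ (Fin n × Fin q) => ℝ))
        volume volume := volume_measurePreserving_sumPiEquivProdPi _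
    have hC : MeasurePreserving
        (Prod.map (id : (Fin q → ℝ) → (Fin q → ℝ)) (curryME (Fin n) (Fin q)))
        volume volume := by
      have h := (MeasurePreserving.id (volume : Measure (Fin q → ℝ))).prod (ih q)
      rwa [← Measure.volume_eq_prod, ← Measure.volume_eq_prod] at h
    have hD : MeasurePreserving
        ((MeasurableEquiv.piFinSuccAbove (fun _ : Fin (n+1) => (Fin q → ℝ)) 0).symm)
        volume volume := (volume_preserving_piFinSuccAbove _ 0).symm
    have hcomp := ((hD.comp hC).comp hB).comp hA
    have hfun : ⇑(curryME (Fin (n+1)) (Fin q)) =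
        ((⇑(MeasurableEquiv.piFinSuccAbove (fun _ : Fin (n+1) => (Fin q → ℝ)) 0).symm ∘
          Prod.map (id : (Fin q → ℝ) → (Fin q → ℝ)) ⇑(curryME (Fin n) (Fin q))) ∘
          ⇑(MeasurableEquiv.sumPiEquivProdPi (fun _ : Fin q ⊕ (Fin n × Fin q) => ℝ))) ∘
          ⇑(MeasurableEquiv.piCongrLeft (fun _ : Fin (n+1) × Fin q => ℝ) e₁).symm := by
      funext gm
      have ha : ∀ s, ((MeasurableEquiv.piCongrLeft (fun _ : Fin (n+1) × Fin q => ℝ) e₁).symm gm) s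
          = gm (e₁ s) := by
        intro s
        conv_rhs => rw [show gm = (MeasurableEquiv.piCongrLeft (fun _ : Fin (n+1) × Fin q => ℝ) e₁)
          ((MeasurableEquiv.piCongrLeft (fun _ : Fin (n+1) × Fin q => ℝ) e₁).symm gm) from
            (MeasurableEquiv.apply_symm_apply _ _).symm]
        exact (MeasurableEquiv.piCongrLeft_apply_apply
          (β := fun _ : Fin (n+1) × Fin q => ℝ) e₁ _ s).symm
      have hc : (MeasurableEquiv.sumPiEquivProdPi (fun _ : Fin q ⊕ (Fin n × Fin q) => ℝ))
          ((MeasurableEquiv.piCongrLeft (fun _ : Fin (n+1) × Fin q => ℝ) e₁).symm gm)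
          = (fun r => gm ((0 : Fin (n+1)), r), fun pr : Fin n × Fin q => gm (pr.1.succ, pr.2)) := by
        refine Prod.ext ?_ ?_
        · funext r
          exact ha (Sum.inl r)
        · funext pr
          exact ha (Sum.inr pr)
      funext i
      simp only [Function.comp_apply, hc]
      refine Fin.cases ?_ ?_ i
      · funext r
        simp only [MeasurableEquiv.piFinSuccAbove_symm_apply, Fin.insertNthEquiv_apply,
          Fin.insertNth_apply_same]
        rfl
      · intro j
        funext r
        simp only [MeasurableEquiv.piFinSuccAbove_symm_apply, Fin.insertNthEquiv_apply]
        rw [show (j.succ : Fin (n+1)) = (0 : Fin (n+1)).succAbove j by rw [Fin.succAbove_zero],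
          Fin.insertNth_apply_succAbove]
        rfl
    rw [← hfun] at hcomp
    exact hcomp

lemma rank_submatrix_rows_le {α β γ : Type*} [Fintype β] (N : Matrix α β ℝ) (f : γ → α) :
    (N.submatrix f id).rank ≤ N.rank := by
  have h : (N.submatrix f id).mulVecLin = (LinearMap.funLeft ℝ ℝ f).comp N.mulVecLin := by
    refine LinearMap.ext fun v => funext fun a => ?_
    rfl
  unfold Matrix.rank
  rw [h, LinearMap.range_comp]
  exact Submodule.finrank_map_le _ _

lemma rank_submatrix_cols_le {α β γ : Type*} [Fintype α] [Fintype β] [Fintype γ]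
    (N : Matrix α β ℝ) (g : γ → β) : (N.submatrix id g).rank ≤ N.rank := by
  have h1 : N.submatrix id g = Matrix.transpose ((Matrix.transpose N).submatrix g id) := rfl
  rw [h1, Matrix.rank_transpose, ← Matrix.rank_transpose N]
  exact rank_submatrix_rows_le _ _

/-- helper for prodCongr measure preservation -/
lemma mp_prodCongr {α β γ δ : Type*} [MeasureSpace α] [MeasureSpace β] [MeasureSpace γ]
    [MeasureSpace δ] [SigmaFinite (volume : Measure α)] [SigmaFinite (volume : Measure γ)]
    (e₁ : α ≃ᵐ β) (e₂ : γ ≃ᵐ δ) (h1 : MeasurePreserving e₁ volume volume)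
    (h2 : MeasurePreserving e₂ volume volume) :
    MeasurePreserving (e₁.prodCongr e₂) volume volume := by
  have h := h1.prod h2
  rwa [← Measure.volume_eq_prod, ← Measure.volume_eq_prod] at h

/-- For generic `X ∈ ℝ^{I×R}`, `Y ∈ ℝ^{J×R}`, `Z ∈ ℝ^{K×R}`, the iterated
Khatri–Rao product `Z ⊙ (Y ⊙ X)` has rank `min (I*J*K) R`: the set of triples
`(X, Y, Z)` where this fails has Lebesgue measure zero. -/
theorem khatriRao_three_generic_rank (I J K R : ℕ)
    (hI : 0 < I) (hJ : 0 < J) (hK : 0 < K) (hR : 0 < R) :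
    MeasureTheory.volume
      {t : (Fin I → Fin R → ℝ) × (Fin J → Fin R → ℝ) × (Fin K → Fin R → ℝ) |
        (khatriRao (Matrix.of t.2.2) (khatriRao (Matrix.of t.2.1) (Matrix.of t.1))).rank
          ≠ min (I * J * K) R} = 0 := by
  classical
  set m := min (I * J * K) R with hm_def
  have hm1 : m ≤ K * (J * I) := by
    calc m ≤ I * J * K := min_le_left _ _
      _ = K * (J * I) := by ring
  have hm2 : m ≤ R := min_le_right _ _
  set E : (Fin K × (Fin J × Fin I)) ≃ Fin (K * (J * I)) :=
    ((Equiv.refl (Fin K)).prodCongr finProdFinEquiv).trans finProdFinEquiv with hE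
  set f : Fin m → Fin K × (Fin J × Fin I) := fun a => E.symm (Fin.castLE hm1 a) with hf
  set g : Fin m → Fin R := Fin.castLE hm2 with hg
  set A : ((Fin I → Fin R → ℝ) × (Fin J → Fin R → ℝ) × (Fin K → Fin R → ℝ)) →
      Matrix (Fin K × (Fin J × Fin I)) (Fin R) ℝ :=
    fun t => khatriRao (Matrix.of t.2.2) (khatriRao (Matrix.of t.2.1) (Matrix.of t.1)) with hA
  set Zset : Set ((Fin I → Fin R → ℝ) × (Fin J → Fin R → ℝ) × (Fin K → Fin R → ℝ)) :=
    {t | ((A t).submatrix f g).det = 0} with hZ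
  -- containment
  have hsub : {t : (Fin I → Fin R → ℝ) × (Fin J → Fin R → ℝ) × (Fin K → Fin R → ℝ) |
      (khatriRao (Matrix.of t.2.2) (khatriRao (Matrix.of t.2.1) (Matrix.of t.1))).rank
        ≠ min (I * J * K) R} ⊆ Zset := by
    intro t ht
    simp only [Set.mem_setOf_eq] at ht ⊢
    by_contra hdet
    apply ht
    have hunit : IsUnit ((A t).submatrix f g) :=
      (Matrix.isUnit_iff_isUnit_det _).mpr (isUnit_iff_ne_zero.mpr hdet)
    have hrank_sub : ((A t).submatrix f g).rank = m := by
      rw [Matrix.rank_of_isUnit _ hunit, Fintype.card_fin]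
    have hge : m ≤ (A t).rank := by
      rw [← hrank_sub]
      calc ((A t).submatrix f g).rank
          = (((A t).submatrix f id).submatrix id g).rank := by
            rw [Matrix.submatrix_submatrix]
            simp
        _ ≤ ((A t).submatrix f id).rank := rank_submatrix_cols_le _ _
        _ ≤ (A t).rank := rank_submatrix_rows_le _ _
    have hle1 : (A t).rank ≤ I * J * K := by
      refine le_trans (Matrix.rank_le_card_height _) (le_of_eq ?_)
      simp [Fintype.card_prod]
      ring
    have hle2 : (A t).rank ≤ R :=
      le_trans (Matrix.rank_le_card_width _) (le_of_eq (Fintype.card_fin R))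
    exact le_antisymm (le_min hle1 hle2) hge
  -- measurability of Zset
  have hZm : MeasurableSet Zset := by
    have hcont : Continuous fun t : (Fin I → Fin R → ℝ) × (Fin J → Fin R → ℝ) ×
        (Fin K → Fin R → ℝ) => ((A t).submatrix f g).det := by
      apply Continuous.matrix_det
      apply continuous_matrix
      intro a b
      have h3 : Continuous fun t : (Fin I → Fin R → ℝ) × (Fin J → Fin R → ℝ) ×
          (Fin K → Fin R → ℝ) => t.2.2 (f a).1 (g b) :=
        (continuous_apply (g b)).comp (((continuous_apply ((f a).1)).comp
          (continuous_snd.comp continuous_snd)))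
      have h2 : Continuous fun t : (Fin I → Fin R → ℝ) × (Fin J → Fin R → ℝ) ×
          (Fin K → Fin R → ℝ) => t.2.1 (f a).2.1 (g b) :=
        (continuous_apply (g b)).comp (((continuous_apply ((f a).2.1)).comp
          (continuous_fst.comp continuous_snd)))
      have h1 : Continuous fun t : (Fin I → Fin R → ℝ) × (Fin J → Fin R → ℝ) ×
          (Fin K → Fin R → ℝ) => t.1 (f a).2.2 (g b) :=
        (continuous_apply (g b)).comp (((continuous_apply ((f a).2.2)).comp continuous_fst))
      exact h3.mul (h2.mul h1)
    exact hcont.measurable (measurableSet_singleton (0 : ℝ))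
  -- variables and measure preserving equivalence
  set Ψ : (((Fin I × Fin R) ⊕ ((Fin J × Fin R) ⊕ (Fin K × Fin R))) → ℝ) ≃ᵐ
      ((Fin I → Fin R → ℝ) × (Fin J → Fin R → ℝ) × (Fin K → Fin R → ℝ)) :=
    (MeasurableEquiv.sumPiEquivProdPi
        (fun _ : (Fin I × Fin R) ⊕ ((Fin J × Fin R) ⊕ (Fin K × Fin R)) => ℝ)).trans
      ((curryME (Fin I) (Fin R)).prodCongr
        ((MeasurableEquiv.sumPiEquivProdPi (fun _ : (Fin J × Fin R) ⊕ (Fin K × Fin R) => ℝ)).trans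
          ((curryME (Fin J) (Fin R)).prodCongr (curryME (Fin K) (Fin R))))) with hΨdef
  have hΨ : MeasurePreserving Ψ volume volume := by
    have h1 := volume_measurePreserving_sumPiEquivProdPi
      (fun _ : (Fin I × Fin R) ⊕ ((Fin J × Fin R) ⊕ (Fin K × Fin R)) => ℝ)
    have h2 := volume_measurePreserving_sumPiEquivProdPi
      (fun _ : (Fin J × Fin R) ⊕ (Fin K × Fin R) => ℝ)
    have hJK : MeasurePreserving
        ((curryME (Fin J) (Fin R)).prodCongr (curryME (Fin K) (Fin R))) volume volume :=
      mp_prodCongr _ _ (curryMP J R) (curryMP K R)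
    have hinner : MeasurePreserving
        ((MeasurableEquiv.sumPiEquivProdPi (fun _ : (Fin J × Fin R) ⊕ (Fin K × Fin R) => ℝ)).trans
          ((curryME (Fin J) (Fin R)).prodCongr (curryME (Fin K) (Fin R)))) volume volume :=
      hJK.comp h2
    have houter : MeasurePreserving
        ((curryME (Fin I) (Fin R)).prodCongr
          ((MeasurableEquiv.sumPiEquivProdPi
              (fun _ : (Fin J × Fin R) ⊕ (Fin K × Fin R) => ℝ)).trans
            ((curryME (Fin J) (Fin R)).prodCongr (curryME (Fin K) (Fin R))))) volume volume :=
      mp_prodCongr _ _ (curryMP I R) hinner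
    exact houter.comp h1
  -- the polynomial
  set P : MvPolynomial ((Fin I × Fin R) ⊕ ((Fin J × Fin R) ⊕ (Fin K × Fin R))) ℝ :=
    (Matrix.of fun a b : Fin m =>
      (X (Sum.inr (Sum.inr ((f a).1, g b))) *
        (X (Sum.inr (Sum.inl ((f a).2.1, g b))) * X (Sum.inl ((f a).2.2, g b)))
        : MvPolynomial ((Fin I × Fin R) ⊕ ((Fin J × Fin R) ⊕ (Fin K × Fin R))) ℝ)).det with hP
  have hkey : ∀ x : ((Fin I × Fin R) ⊕ ((Fin J × Fin R) ⊕ (Fin K × Fin R))) → ℝ,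
      eval x P = ((A (Ψ x)).submatrix f g).det := by
    intro x
    rw [hP, RingHom.map_det]
    congr 1
    ext a b
    simp only [RingHom.mapMatrix_apply, Matrix.map_apply, Matrix.of_apply, map_mul, eval_X]
    rfl
  -- witness: the polynomial is nonzero
  have hPne : P ≠ 0 := by
    intro h0
    set x₀ : ((Fin I × Fin R) ⊕ ((Fin J × Fin R) ⊕ (Fin K × Fin R))) → ℝ :=
      fun v => match v with
        | Sum.inl (i, r) => ((r : ℕ) : ℝ) ^ (i : ℕ)
        | Sum.inr (Sum.inl (j, r)) => ((r : ℕ) : ℝ) ^ (I * (j : ℕ))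
        | Sum.inr (Sum.inr (k, r)) => ((r : ℕ) : ℝ) ^ ((J * I) * (k : ℕ)) with hx₀
    have heval : eval x₀ P = (Matrix.transpose (Matrix.vandermonde (fun b : Fin m => ((b : ℕ) : ℝ)))).det := by
      rw [hP, RingHom.map_det]
      congr 1
      ext a b
      simp only [RingHom.mapMatrix_apply, Matrix.map_apply, Matrix.of_apply, map_mul, eval_X,
        Matrix.transpose_apply, Matrix.vandermonde]
      have hgb : ((g b : ℕ) : ℝ) = ((b : ℕ) : ℝ) := by rw [hg]; rfl
      have hEfa : ((E (f a)) : ℕ) = (a : ℕ) := by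
        rw [hf, Equiv.apply_symm_apply]
        rfl
      have hsplit : ((E (f a)) : ℕ)
          = (((f a).2.2 : ℕ) + I * ((f a).2.1 : ℕ)) + (J * I) * ((f a).1 : ℕ) := rfl
      show x₀ (Sum.inr (Sum.inr ((f a).1, g b))) *
          (x₀ (Sum.inr (Sum.inl ((f a).2.1, g b))) * x₀ (Sum.inl ((f a).2.2, g b)))
          = ((b : ℕ) : ℝ) ^ (a : ℕ)
      rw [hx₀]
      show ((g b : ℕ) : ℝ) ^ ((J * I) * ((f a).1 : ℕ)) *
          (((g b : ℕ) : ℝ) ^ (I * ((f a).2.1 : ℕ)) * ((g b : ℕ) : ℝ) ^ (((f a).2.2 : ℕ)))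
          = ((b : ℕ) : ℝ) ^ (a : ℕ)
      rw [hgb, ← pow_add, ← pow_add, ← hEfa, hsplit]
      ring_nf
    have hvne : (Matrix.transpose (Matrix.vandermonde (fun b : Fin m => ((b : ℕ) : ℝ)))).det ≠ 0 := by
      rw [Matrix.det_transpose]
      refine Matrix.det_vandermonde_ne_zero_iff.mpr ?_
      intro b1 b2 hb
      exact Fin.val_injective (Nat.cast_injective hb)
    rw [h0, map_zero] at heval
    exact hvne heval.symm
  -- conclude
  have hpreZ : Ψ ⁻¹' Zset = {x | eval x P = 0} := by
    ext x
    simp only [Set.mem_preimage, hZ, Set.mem_setOf_eq, hkey x]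
  have hZ0 : volume Zset = 0 := by
    rw [← hΨ.measure_preimage hZm.nullMeasurableSet, hpreZ]
    exact mv_zero_null_fintype P hPne
  exact measure_mono_null hsub hZ0
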